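/- Let a ≥ 1 and t > 0 be real numbers. Then a·sinh((a+1)t) ≤ (a+1)·e^t·sinh(a·t). -/

import Mathlib

/-- a·sinh((a+1)t) ≤ (a+1)·e^t·sinh(a·t) for a ≥ 1, t > 0. -/
theorem stmt15 (a t : ℝ) (ha : 1 ≤ a) (ht : 0 < t) :
    a * Real.sinh ((a + 1) * t) ≤ (a + 1) * Real.exp t * Real.sinh (a * t) := by
  have hX : 0 < Real.exp t := Real.exp_pos t
  have hY : 0 < Real.exp (a * t) := Real.exp_pos _
  have hs : (-1 : ℝ) ≤ Real.exp (2 * t) - 1 := by nlinarith [Real.exp_pos (2*t)]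
  have hb := one_add_mul_self_le_rpow_one_add hs (by linarith : (1:ℝ) ≤ a + 1)
  rw [add_sub_cancel, ← Real.exp_mul] at hb
  have h1 : Real.exp (2 * t) = Real.exp t * Real.exp t := by
    rw [two_mul, Real.exp_add]
  have h2 : Real.exp (2 * t * (a + 1)) =
      (Real.exp t * Real.exp (a * t)) * (Real.exp t * Real.exp (a * t)) := by
    rw [show 2 * t * (a + 1) = (t + a * t) + (t + a * t) by ring, Real.exp_add, Real.exp_add]
  have h3 : Real.exp ((a + 1) * t) = Real.exp t * Real.exp (a * t) := by
    rw [show (a + 1) * t = t + a * t by ring, Real.exp_add]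
  rw [Real.sinh_eq, Real.sinh_eq, h3, Real.exp_neg, Real.exp_neg, h3]
  rw [h1, h2] at hb
  have hXY : 0 < Real.exp t * Real.exp (a * t) := mul_pos hX hY
  set P := Real.exp t
  set Q := Real.exp (a * t)
  have key : a * (P * Q - (P * Q)⁻¹) ≤ (a + 1) * P * (Q - Q⁻¹) := by
    rw [← mul_le_mul_iff_of_pos_right hXY]
    have l : a * (P * Q - (P * Q)⁻¹) * (P * Q) = a * ((P * Q) * (P * Q)) - a := by
      field_simp
    have r : (a + 1) * P * (Q - Q⁻¹) * (P * Q)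
        = (a + 1) * ((P * Q) * (P * Q)) - (a + 1) * (P * P) := by
      field_simp
    rw [l, r]
    nlinarith [mul_pos hXY hXY]
  linarith
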